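/- For distinct natural numbers k and t, the 32 entries of the two quantum Latin squares W_{2k−1,2k} and W_{2t−1,2t} are pairwise distinct up to global phase; in particular, there exist infinitely many QLS(4)s with maximal cardinality 16 in ℋ_2⊗ℋ_2 whose element sets are pairwise disjoint. -/

import Mathlib

noncomputable section

/-- Two vectors are identified when they differ by a global phase `e^{iθ}`. -/
def PhaseEq {E : Type*} [AddCommGroup E] [Module ℂ E] (u v : E) : Prop :=
  ∃ θ : ℝ, u = Complex.exp (θ * Complex.I) • v

/-- Concrete tensor product `u ⊗ v` of Euclidean space vectors. -/
def tens {ι κ : Type*} (u : EuclideanSpace ℂ ι) (v : EuclideanSpace ℂ κ) :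
    EuclideanSpace ℂ (ι × κ) :=
  (WithLp.equiv 2 _).symm (fun p : ι × κ => u p.1 * v p.2)

/-- An array (with arbitrary finite index types) all of whose rows and columns
are orthonormal families. -/
def IsQLSIdx {ι κ E : Type*} [NormedAddCommGroup E] [InnerProductSpace ℂ E]
    (M : ι → κ → E) : Prop :=
  (∀ i, Orthonormal ℂ (fun j => M i j)) ∧ (∀ j, Orthonormal ℂ (fun i => M i j))

/-- The family `f` has exactly `c` distinct members up to global phase. -/
def FamCardEq {ι E : Type*} [AddCommGroup E] [Module ℂ E] (f : ι → E) (c : ℕ) : Prop :=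
  ∃ reps : Fin c → E,
    (∀ i, ∃ k, PhaseEq (f i) (reps k)) ∧
    (∀ k, ∃ i, PhaseEq (f i) (reps k)) ∧
    (∀ k l, k ≠ l → ¬ PhaseEq (reps k) (reps l))

/-- `|0⟩, |1⟩` in `ℋ₂`. -/
def e2 : Fin 2 → EuclideanSpace ℂ (Fin 2) := fun i => EuclideanSpace.single i 1

/-- The 2×2 row-quantum Latin rectangle `V_{a,b}`. -/
def Vab (a b : ℝ) : Fin 2 → Fin 2 → EuclideanSpace ℂ (Fin 2) := fun i j =>
  (fun t : ℝ =>
    ((Real.sqrt (1 + t ^ 2) : ℝ)⁻¹ : ℂ) •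
      (if j = 0 then e2 0 + (t : ℂ) • e2 1 else (-(t : ℂ)) • e2 0 + e2 1))
  (if i = 0 then a else b)

/-- The QLS(4) `W_{a,b}` obtained from the product construction applied to
`V_{0,1}` and `V_{a,b}`. -/
def Wab (a b : ℝ) : (Fin 2 × Fin 2) → (Fin 2 × Fin 2) → EuclideanSpace ℂ (Fin 2 × Fin 2) :=
  fun r c => tens (Vab 0 1 r.1 (c.1 + r.2)) (Vab a b c.1 (r.1 + c.2))

def row (t : ℝ) (j : Fin 2) : EuclideanSpace ℂ (Fin 2) := Vab t t 0 j

lemma Vab_eq_row (a b : ℝ) (i : Fin 2) : Vab a b i = row (if i = 0 then a else b) := by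
  funext j
  fin_cases i <;> simp [Vab, row]

lemma row_apply (t : ℝ) (j p : Fin 2) :
    row t j p = ((Real.sqrt (1 + t ^ 2))⁻¹ : ℝ) *
      (if j = 0 then (if p = 0 then 1 else (t : ℂ)) else (if p = 0 then -(t : ℂ) else 1)) := by
  fin_cases j <;> fin_cases p <;> simp [row, Vab, e2, EuclideanSpace.single_apply]

lemma sqrt_fact (t : ℝ) : Real.sqrt (1 + t ^ 2) * Real.sqrt (1 + t ^ 2) = 1 + t ^ 2 :=
  Real.mul_self_sqrt (by positivity)

lemma sqrt_ne (t : ℝ) : Real.sqrt (1 + t ^ 2) ≠ 0 := by positivity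

lemma row_B (t : ℝ) (j : Fin 2) :
    row t j 0 * (starRingEnd ℂ) (row t j 1)
      = (((if j = 0 then t else -t) / (1 + t ^ 2) : ℝ) : ℂ) := by
  have h := sqrt_fact t
  have h2 := sqrt_ne t
  fin_cases j <;>
    simp [row_apply, Complex.conj_ofReal, map_mul] <;>
    norm_cast <;> field_simp <;> rw [Real.sq_sqrt (by positivity)]

lemma row_D (t : ℝ) (j : Fin 2) :
    row t j 0 * (starRingEnd ℂ) (row t j 0)
      = (((if j = 0 then 1 else t ^ 2) / (1 + t ^ 2) : ℝ) : ℂ) := by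
  have h := sqrt_fact t
  have h2 := sqrt_ne t
  fin_cases j <;>
    simp [row_apply, Complex.conj_ofReal, map_mul] <;>
    norm_cast <;> field_simp <;> nlinarith [h]

lemma row_norm (t : ℝ) (j : Fin 2) :
    row t j 0 * (starRingEnd ℂ) (row t j 0) + row t j 1 * (starRingEnd ℂ) (row t j 1) = 1 := by
  have h := sqrt_fact t
  have h2 := sqrt_ne t
  fin_cases j <;>
    simp [row_apply, Complex.conj_ofReal, map_mul] <;>
    norm_cast <;> field_simp <;> nlinarith [h]

-- invariants
def IA (w : EuclideanSpace ℂ (Fin 2 × Fin 2)) : ℂ :=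
  w (0,0) * (starRingEnd ℂ) (w (1,0)) + w (0,1) * (starRingEnd ℂ) (w (1,1))
def IB (w : EuclideanSpace ℂ (Fin 2 × Fin 2)) : ℂ :=
  w (0,0) * (starRingEnd ℂ) (w (0,1)) + w (1,0) * (starRingEnd ℂ) (w (1,1))
def IC (w : EuclideanSpace ℂ (Fin 2 × Fin 2)) : ℂ :=
  w (0,0) * (starRingEnd ℂ) (w (0,0)) + w (0,1) * (starRingEnd ℂ) (w (0,1))
def ID (w : EuclideanSpace ℂ (Fin 2 × Fin 2)) : ℂ :=
  w (0,0) * (starRingEnd ℂ) (w (0,0)) + w (1,0) * (starRingEnd ℂ) (w (1,0))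

lemma phase_prod {u v : EuclideanSpace ℂ (Fin 2 × Fin 2)} (h : PhaseEq u v)
    (p q : Fin 2 × Fin 2) :
    u p * (starRingEnd ℂ) (u q) = v p * (starRingEnd ℂ) (v q) := by
  obtain ⟨θ, rfl⟩ := h
  have hap : ∀ r, (Complex.exp (θ * Complex.I) • v) r = Complex.exp (θ * Complex.I) * v r :=
    fun _ => rfl
  rw [hap, hap, map_mul]
  have : Complex.exp (θ * Complex.I) * (starRingEnd ℂ) (Complex.exp (θ * Complex.I)) = 1 := by
    rw [← Complex.exp_conj, map_mul, Complex.conj_ofReal, Complex.conj_I, ← Complex.exp_add]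
    simp
  calc Complex.exp (θ * Complex.I) * v p *
        ((starRingEnd ℂ) (Complex.exp (θ * Complex.I)) * (starRingEnd ℂ) (v q))
      = (Complex.exp (θ * Complex.I) * (starRingEnd ℂ) (Complex.exp (θ * Complex.I))) *
          (v p * (starRingEnd ℂ) (v q)) := by ring
    _ = v p * (starRingEnd ℂ) (v q) := by rw [this, one_mul]

lemma phase_IA {u v : EuclideanSpace ℂ (Fin 2 × Fin 2)} (h : PhaseEq u v) : IA u = IA v := by
  unfold IA; rw [phase_prod h, phase_prod h]
lemma phase_IB {u v : EuclideanSpace ℂ (Fin 2 × Fin 2)} (h : PhaseEq u v) : IB u = IB v := by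
  unfold IB; rw [phase_prod h, phase_prod h]
lemma phase_IC {u v : EuclideanSpace ℂ (Fin 2 × Fin 2)} (h : PhaseEq u v) : IC u = IC v := by
  unfold IC; rw [phase_prod h, phase_prod h]
lemma phase_ID {u v : EuclideanSpace ℂ (Fin 2 × Fin 2)} (h : PhaseEq u v) : ID u = ID v := by
  unfold ID; rw [phase_prod h, phase_prod h]

lemma Wab_apply (a b : ℝ) (r c p : Fin 2 × Fin 2) :
    Wab a b r c p = row (if r.1 = 0 then 0 else 1) (c.1 + r.2) p.1 *
      row (if c.1 = 0 then a else b) (r.1 + c.2) p.2 := by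
  simp only [Wab, tens, Vab_eq_row]
  rfl

lemma IA_W (a b : ℝ) (r c : Fin 2 × Fin 2) :
    IA (Wab a b r c) =
      ((((if c.1 + r.2 = 0 then (if r.1 = 0 then (0:ℝ) else 1) else -(if r.1 = 0 then (0:ℝ) else 1)) /
        (1 + (if r.1 = 0 then (0:ℝ) else 1) ^ 2)) : ℝ) : ℂ) := by
  have : IA (Wab a b r c) =
      (row (if r.1 = 0 then 0 else 1) (c.1 + r.2) 0 *
        (starRingEnd ℂ) (row (if r.1 = 0 then 0 else 1) (c.1 + r.2) 1)) *
      (row (if c.1 = 0 then a else b) (r.1 + c.2) 0 *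
        (starRingEnd ℂ) (row (if c.1 = 0 then a else b) (r.1 + c.2) 0) +
       row (if c.1 = 0 then a else b) (r.1 + c.2) 1 *
        (starRingEnd ℂ) (row (if c.1 = 0 then a else b) (r.1 + c.2) 1)) := by
    simp only [IA, Wab_apply, map_mul]; ring
  rw [this, row_norm, row_B, mul_one]

lemma IC_W (a b : ℝ) (r c : Fin 2 × Fin 2) :
    IC (Wab a b r c) =
      ((((if c.1 + r.2 = 0 then (1:ℝ) else (if r.1 = 0 then (0:ℝ) else 1) ^ 2) /
        (1 + (if r.1 = 0 then (0:ℝ) else 1) ^ 2)) : ℝ) : ℂ) := by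
  have : IC (Wab a b r c) =
      (row (if r.1 = 0 then 0 else 1) (c.1 + r.2) 0 *
        (starRingEnd ℂ) (row (if r.1 = 0 then 0 else 1) (c.1 + r.2) 0)) *
      (row (if c.1 = 0 then a else b) (r.1 + c.2) 0 *
        (starRingEnd ℂ) (row (if c.1 = 0 then a else b) (r.1 + c.2) 0) +
       row (if c.1 = 0 then a else b) (r.1 + c.2) 1 *
        (starRingEnd ℂ) (row (if c.1 = 0 then a else b) (r.1 + c.2) 1)) := by
    simp only [IC, Wab_apply, map_mul]; ring
  rw [this, row_norm, row_D, mul_one]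

lemma IB_W (a b : ℝ) (r c : Fin 2 × Fin 2) :
    IB (Wab a b r c) =
      ((((if r.1 + c.2 = 0 then (if c.1 = 0 then a else b) else -(if c.1 = 0 then a else b)) /
        (1 + (if c.1 = 0 then a else b) ^ 2)) : ℝ) : ℂ) := by
  have : IB (Wab a b r c) =
      (row (if r.1 = 0 then 0 else 1) (c.1 + r.2) 0 *
        (starRingEnd ℂ) (row (if r.1 = 0 then 0 else 1) (c.1 + r.2) 0) +
       row (if r.1 = 0 then 0 else 1) (c.1 + r.2) 1 *
        (starRingEnd ℂ) (row (if r.1 = 0 then 0 else 1) (c.1 + r.2) 1)) *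
      (row (if c.1 = 0 then a else b) (r.1 + c.2) 0 *
        (starRingEnd ℂ) (row (if c.1 = 0 then a else b) (r.1 + c.2) 1)) := by
    simp only [IB, Wab_apply, map_mul]; ring
  rw [this, row_norm, row_B, one_mul]

lemma ID_W (a b : ℝ) (r c : Fin 2 × Fin 2) :
    ID (Wab a b r c) =
      ((((if r.1 + c.2 = 0 then (1:ℝ) else (if c.1 = 0 then a else b) ^ 2) /
        (1 + (if c.1 = 0 then a else b) ^ 2)) : ℝ) : ℂ) := by
  have : ID (Wab a b r c) =
      (row (if r.1 = 0 then 0 else 1) (c.1 + r.2) 0 *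
        (starRingEnd ℂ) (row (if r.1 = 0 then 0 else 1) (c.1 + r.2) 0) +
       row (if r.1 = 0 then 0 else 1) (c.1 + r.2) 1 *
        (starRingEnd ℂ) (row (if r.1 = 0 then 0 else 1) (c.1 + r.2) 1)) *
      (row (if c.1 = 0 then a else b) (r.1 + c.2) 0 *
        (starRingEnd ℂ) (row (if c.1 = 0 then a else b) (r.1 + c.2) 0)) := by
    simp only [ID, Wab_apply, map_mul]; ring
  rw [this, row_norm, row_D, one_mul]

lemma fin2_cases (x : Fin 2) : x = 0 ∨ x = 1 := by omega

lemma key (a b a' b' : ℝ) (ha : 0 < a) (hb : 0 < b) (ha' : 0 < a') (hb' : 0 < b')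
    (r c r' c' : Fin 2 × Fin 2)
    (h : r.1 ≠ r'.1 ∨ c.1 + r.2 ≠ c'.1 + r'.2 ∨ r.1 + c.2 ≠ r'.1 + c'.2 ∨
      (if c.1 = 0 then a else b) ≠ (if c'.1 = 0 then a' else b')) :
    ¬ PhaseEq (Wab a b r c) (Wab a' b' r' c') := by
  intro hP
  have ht : (0:ℝ) < (if c.1 = 0 then a else b) := by split <;> assumption
  have ht' : (0:ℝ) < (if c'.1 = 0 then a' else b') := by split <;> assumption
  set t : ℝ := if c.1 = 0 then a else b
  set t' : ℝ := if c'.1 = 0 then a' else b'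
  have EA : ((((if c.1 + r.2 = 0 then (if r.1 = 0 then (0:ℝ) else 1) else -(if r.1 = 0 then (0:ℝ) else 1)) /
        (1 + (if r.1 = 0 then (0:ℝ) else 1) ^ 2))) : ℝ)
      = (((if c'.1 + r'.2 = 0 then (if r'.1 = 0 then (0:ℝ) else 1) else -(if r'.1 = 0 then (0:ℝ) else 1)) /
        (1 + (if r'.1 = 0 then (0:ℝ) else 1) ^ 2)) : ℝ) := by
    have E0 := phase_IA hP; rw [IA_W, IA_W] at E0; exact_mod_cast E0
  have EB : (((if r.1 + c.2 = 0 then t else -t) / (1 + t ^ 2)) : ℝ)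
      = (((if r'.1 + c'.2 = 0 then t' else -t') / (1 + t' ^ 2)) : ℝ) := by
    have E0 := phase_IB hP; rw [IB_W, IB_W] at E0; exact_mod_cast E0
  have EC : (((if c.1 + r.2 = 0 then (1:ℝ) else (if r.1 = 0 then (0:ℝ) else 1) ^ 2) /
        (1 + (if r.1 = 0 then (0:ℝ) else 1) ^ 2)) : ℝ)
      = (((if c'.1 + r'.2 = 0 then (1:ℝ) else (if r'.1 = 0 then (0:ℝ) else 1) ^ 2) /
        (1 + (if r'.1 = 0 then (0:ℝ) else 1) ^ 2)) : ℝ) := by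
    have E0 := phase_IC hP; rw [IC_W, IC_W] at E0; exact_mod_cast E0
  have ED : (((if r.1 + c.2 = 0 then (1:ℝ) else t ^ 2) / (1 + t ^ 2)) : ℝ)
      = (((if r'.1 + c'.2 = 0 then (1:ℝ) else t' ^ 2) / (1 + t' ^ 2)) : ℝ) := by
    have E0 := phase_ID hP; rw [ID_W, ID_W] at E0; exact_mod_cast E0
  -- v-part facts
  have p1 : (0:ℝ) < 1 + t ^ 2 := by positivity
  have p2 : (0:ℝ) < 1 + t' ^ 2 := by positivity
  have hvB : r.1 + c.2 = r'.1 + c'.2 := by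
    by_contra hj
    rcases fin2_cases (r.1 + c.2) with hx | hx <;> rcases fin2_cases (r'.1 + c'.2) with hy | hy <;>
      rw [hx, hy] at EB hj <;> simp at hj EB <;> field_simp at EB <;>
      nlinarith [mul_pos ht p2, mul_pos ht' p1, mul_pos ht ht', sq_nonneg t, sq_nonneg t']
  have hvT : t = t' := by
    have hsq : t ^ 2 = t' ^ 2 := by
      rw [hvB] at ED
      rcases fin2_cases (r'.1 + c'.2) with hx | hx <;> rw [hx] at ED <;> simp at ED <;>
        field_simp at ED <;> first | rw [ED] | linarith [ED]
    have h3 : (t - t') * (t + t') = 0 := by linear_combination hsq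
    rcases mul_eq_zero.mp h3 with h4 | h4
    · linarith
    · linarith
  have hu' : (r.1, c.1 + r.2) ≠ (r'.1, c'.1 + r'.2) := by
    rcases h with hu | hu | hu | hu
    · simp [Prod.ext_iff]; intro hc; exact absurd hc hu
    · simp [Prod.ext_iff]; intro _; exact hu
    · exact absurd hvB hu
    · exact absurd hvT hu
  rcases fin2_cases r.1 with h1 | h1 <;> rcases fin2_cases r'.1 with h2 | h2 <;>
    rcases fin2_cases (c.1 + r.2) with h3 | h3 <;> rcases fin2_cases (c'.1 + r'.2) with h4 | h4 <;>
    rw [h1, h2, h3, h4] at EA EC <;>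
    first
      | (rw [h1, h2, h3, h4] at hu'; exact hu' rfl)
      | (first | (norm_num at EA; done) | norm_num at EC)

open scoped InnerProductSpace in
lemma inner_tens {ι κ : Type*} [Fintype ι] [Fintype κ]
    (u u' : EuclideanSpace ℂ ι) (v v' : EuclideanSpace ℂ κ) :
    ⟪tens u v, tens u' v'⟫_ℂ = ⟪u, u'⟫_ℂ * ⟪v, v'⟫_ℂ := by
  simp only [PiLp.inner_apply, RCLike.inner_apply, tens, WithLp.equiv_symm_apply, PiLp.toLp_apply,
    Fintype.sum_prod_type, map_mul]
  rw [Finset.sum_mul_sum]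
  exact Finset.sum_congr rfl fun i _ => Finset.sum_congr rfl fun j _ => by ring

open scoped InnerProductSpace in
lemma row_inner (t : ℝ) (j j' : Fin 2) :
    ⟪row t j, row t j'⟫_ℂ = if j = j' then 1 else 0 := by
  have h := sqrt_fact t
  have h2 := sqrt_ne t
  fin_cases j <;> fin_cases j' <;>
    simp [PiLp.inner_apply, RCLike.inner_apply, Fin.sum_univ_two, row_apply,
      Complex.conj_ofReal, -inner_self_eq_norm_sq_to_K] <;>
    norm_cast <;> field_simp <;> nlinarith [h]

lemma W_QLS (a b : ℝ) : IsQLSIdx (Wab a b) := by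
  constructor
  · intro r
    rw [orthonormal_iff_ite]
    intro c c'
    show (inner ℂ (tens (Vab 0 1 r.1 (c.1 + r.2)) (Vab a b c.1 (r.1 + c.2)))
      (tens (Vab 0 1 r.1 (c'.1 + r.2)) (Vab a b c'.1 (r.1 + c'.2))) : ℂ) = _
    rw [inner_tens]
    simp only [Vab_eq_row]
    by_cases h1 : c.1 = c'.1
    · rw [h1, row_inner, row_inner]
      simp [Prod.ext_iff, h1, add_right_inj]
    · have : c.1 + r.2 ≠ c'.1 + r.2 := by
        simpa [add_left_inj] using h1
      rw [row_inner]
      simp [this, Prod.ext_iff, h1]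
  · intro c
    rw [orthonormal_iff_ite]
    intro r r'
    show (inner ℂ (tens (Vab 0 1 r.1 (c.1 + r.2)) (Vab a b c.1 (r.1 + c.2)))
      (tens (Vab 0 1 r'.1 (c.1 + r'.2)) (Vab a b c.1 (r'.1 + c.2))) : ℂ) = _
    rw [inner_tens]
    simp only [Vab_eq_row]
    by_cases h1 : r.1 = r'.1
    · rw [h1, row_inner, row_inner]
      simp [Prod.ext_iff, h1, add_right_inj]
    · have : r.1 + c.2 ≠ r'.1 + c.2 := by
        simpa [add_left_inj] using h1
      rw [row_inner (if c.1 = 0 then a else b)]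
      simp [this, Prod.ext_iff, h1]


lemma phase_refl {E : Type*} [AddCommGroup E] [Module ℂ E] (u : E) : PhaseEq u u :=
  ⟨0, by simp⟩

lemma within (a b : ℝ) (ha : 0 < a) (hb : 0 < b) (hab : a ≠ b)
    (q q' : (Fin 2 × Fin 2) × (Fin 2 × Fin 2)) (hq : q ≠ q') :
    ¬ PhaseEq (Wab a b q.1 q.2) (Wab a b q'.1 q'.2) := by
  obtain ⟨⟨r1, r2⟩, c1, c2⟩ := q
  obtain ⟨⟨r1', r2'⟩, c1', c2'⟩ := q'
  apply key a b a b ha hb ha hb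
  by_contra hcon
  push_neg at hcon
  obtain ⟨h1, h2, h3, h4⟩ := hcon
  simp only at h1 h2 h3 h4
  have hc1 : c1 = c1' := by
    by_contra hc
    rcases fin2_cases c1 with hx | hx <;> rcases fin2_cases c1' with hy | hy <;>
      rw [hx, hy] at h4 hc <;>
      first
        | exact hc rfl
        | (simp at h4; first | exact hab h4 | exact hab h4.symm)
  subst hc1; subst h1
  have hr2 : r2 = r2' := (add_right_inj _).mp h2
  have hc2 : c2 = c2' := (add_right_inj _).mp h3
  subst hr2; subst hc2
  exact hq rfl

lemma W_card (a b : ℝ) (ha : 0 < a) (hb : 0 < b) (hab : a ≠ b) :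
    FamCardEq (fun q : (Fin 2 × Fin 2) × (Fin 2 × Fin 2) => Wab a b q.1 q.2) 16 := by
  have e : Fin 16 ≃ ((Fin 2 × Fin 2) × (Fin 2 × Fin 2)) :=
    (Fintype.equivFinOfCardEq (by norm_num)).symm
  refine ⟨fun k => Wab a b (e k).1 (e k).2, ?_, ?_, ?_⟩
  · intro i
    exact ⟨e.symm i, by simp only [Equiv.apply_symm_apply]; exact phase_refl _⟩
  · intro k
    exact ⟨e k, phase_refl _⟩
  · intro k l hkl
    exact within a b ha hb hab (e k) (e l) (fun h => hkl (e.injective h))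

/-- For every positive natural `k`, `W_{2k-1,2k}` is a QLS(4) with maximal
cardinality 16 in `ℋ₂ ⊗ ℋ₂`, and for distinct positive naturals `k ≠ t` all
32 entries of `W_{2k-1,2k}` and `W_{2t-1,2t}` are pairwise distinct up to
global phase. -/
theorem Wab_family_distinct :
    (∀ k : ℕ, 1 ≤ k →
      IsQLSIdx (Wab ((2 * k - 1 : ℕ) : ℝ) ((2 * k : ℕ) : ℝ)) ∧
      FamCardEq
        (fun q : (Fin 2 × Fin 2) × (Fin 2 × Fin 2) =>
          Wab ((2 * k - 1 : ℕ) : ℝ) ((2 * k : ℕ) : ℝ) q.1 q.2) 16) ∧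
    (∀ k t : ℕ, 1 ≤ k → 1 ≤ t → k ≠ t →
      ∀ r c r' c' : Fin 2 × Fin 2,
        ¬ PhaseEq (Wab ((2 * k - 1 : ℕ) : ℝ) ((2 * k : ℕ) : ℝ) r c)
          (Wab ((2 * t - 1 : ℕ) : ℝ) ((2 * t : ℕ) : ℝ) r' c')) := by
  constructor
  · intro k hk
    have ha : (0:ℝ) < ((2*k-1:ℕ):ℝ) := by
      have h1 : 0 < 2*k-1 := by omega
      exact_mod_cast h1
    have hb : (0:ℝ) < ((2*k:ℕ):ℝ) := by
      have h1 : 0 < 2*k := by omega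
      exact_mod_cast h1
    have hab : ((2*k-1:ℕ):ℝ) ≠ ((2*k:ℕ):ℝ) := by
      have h1 : 2*k-1 ≠ 2*k := by omega
      exact_mod_cast h1
    exact ⟨W_QLS _ _, W_card _ _ ha hb hab⟩
  · intro k t hk ht hkt r c r' c'
    have ha : (0:ℝ) < ((2*k-1:ℕ):ℝ) := by
      have h1 : 0 < 2*k-1 := by omega
      exact_mod_cast h1
    have hb : (0:ℝ) < ((2*k:ℕ):ℝ) := by
      have h1 : 0 < 2*k := by omega
      exact_mod_cast h1
    have ha' : (0:ℝ) < ((2*t-1:ℕ):ℝ) := by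
      have h1 : 0 < 2*t-1 := by omega
      exact_mod_cast h1
    have hb' : (0:ℝ) < ((2*t:ℕ):ℝ) := by
      have h1 : 0 < 2*t := by omega
      exact_mod_cast h1
    apply key _ _ _ _ ha hb ha' hb'
    right; right; right
    have e1 : ((2*k-1:ℕ):ℝ) ≠ ((2*t-1:ℕ):ℝ) := by
      have : 2*k-1 ≠ 2*t-1 := by omega
      exact_mod_cast this
    have e2 : ((2*k-1:ℕ):ℝ) ≠ ((2*t:ℕ):ℝ) := by
      have : 2*k-1 ≠ 2*t := by omega
      exact_mod_cast this
    have e3 : ((2*k:ℕ):ℝ) ≠ ((2*t-1:ℕ):ℝ) := by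
      have : 2*k ≠ 2*t-1 := by omega
      exact_mod_cast this
    have e4 : ((2*k:ℕ):ℝ) ≠ ((2*t:ℕ):ℝ) := by
      have : 2*k ≠ 2*t := by omega
      exact_mod_cast this
    split_ifs <;> assumption
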